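/- Let G be a finite group and N ⊴ G such that N ∩ S_p ≤ Φ(S_p) for every prime p and Sylow p-subgroup S_p of G. Then the Fitting subgroup of G/N equals F(G)/N. -/

import Mathlib

open Subgroup Pointwise

section Aux

variable {G : Type*} [Group G] [Finite G]

/-- Key elementary lemma: if `N ⊴ G` meets every Sylow subgroup inside its Frattini
subgroup, then `N ≤ Φ(G)`. -/
lemma le_frattini_of_inf_sylow_le_frattini (N : Subgroup G) [N.Normal]
    (h : ∀ (p : ℕ), p.Prime → ∀ S : Sylow p G,
      N ⊓ (S : Subgroup G) ≤ (frattini ↥(S : Subgroup G)).map (S : Subgroup G).subtype) :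
    N ≤ frattini G := by
  rw [show frattini G = Order.radical (Subgroup G) from rfl, Order.radical]
  simp only [le_iInf_iff, Set.mem_setOf_eq]
  intro M hM
  by_contra hNM
  -- Since `M` is maximal and `N ⊄ M`, we have `M ⊔ N = ⊤`.
  have hsup : M ⊔ N = ⊤ :=
    hM.2 _ (lt_of_le_of_ne le_sup_left (fun e => hNM (le_sup_right.trans e.ge)))
  apply hM.1
  rw [← Subgroup.index_eq_one]
  by_contra hidx
  obtain ⟨p, pp, hp⟩ := Nat.exists_prime_and_dvd hidx
  haveI : Fact p.Prime := ⟨pp⟩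
  -- take a Sylow `p`-subgroup `T` of `M` and extend it to a Sylow `S` of `G`
  let T : Sylow p ↥M := Sylow.nonempty.some
  set T' : Subgroup G := map M.subtype T with hT'
  have hT'p : IsPGroup p T' := T.2.map _
  obtain ⟨S, hTS⟩ := hT'p.exists_le_sylow
  set f := QuotientGroup.mk' N with hf
  have hfsurj : Function.Surjective f := QuotientGroup.mk'_surjective N
  have hfM : map f M = ⊤ := by
    have h1 : map f N = ⊥ := (Subgroup.map_eq_bot_iff _).mpr
      (by rw [hf, QuotientGroup.ker_mk'])
    have h2 : map f (M ⊔ N) = ⊤ := by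
      rw [hsup, ← top_le_iff]
      intro x _
      obtain ⟨g, rfl⟩ := hfsurj x
      exact mem_map_of_mem f (mem_top g)
    rwa [Subgroup.map_sup, h1, sup_bot_eq] at h2
  set g : ↥M →* G ⧸ N := f.comp M.subtype with hg
  have hgsurj : Function.Surjective g := by
    rw [← MonoidHom.range_eq_top, hg, MonoidHom.range_comp, Subgroup.range_subtype, hfM]
  let Q : Sylow p (G ⧸ N) := T.mapSurjective hgsurj
  have hQcoe : (Q : Subgroup (G ⧸ N)) = map f T' := by
    rw [show (Q : Subgroup (G ⧸ N)) = map g T from rfl, hT', Subgroup.map_map]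
  have hSQ : map f (S : Subgroup G) = map f T' := by
    rw [← hQcoe]
    exact Q.3 (S.2.map f) (hQcoe ▸ map_mono hTS)
  have hSTN : (S : Subgroup G) ≤ T' ⊔ N := by
    calc (S : Subgroup G) ≤ comap f (map f (S : Subgroup G)) :=
      fun x hx => Subgroup.mem_comap.mpr (Subgroup.mem_map_of_mem f hx)
    _ = comap f (map f T') := by rw [hSQ]
    _ = T' ⊔ N := by rw [comap_map_eq, hf, QuotientGroup.ker_mk']
  -- now work inside `S`
  have hA : T'.subgroupOf S ⊔ frattini ↥(S : Subgroup G) = ⊤ := by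
    rw [eq_top_iff]
    rintro x -
    have hx : (x : G) ∈ ((T' : Set G) * (N : Set G)) := by
      rw [← Subgroup.mul_normal]
      exact hSTN x.2
    obtain ⟨t, ht, n, hn, htn⟩ := hx
    have htS : t ∈ (S : Subgroup G) := hTS ht
    have hnS : n ∈ (S : Subgroup G) := by
      have hne : n = t⁻¹ * (x : G) := by rw [← htn]; group
      rw [hne]; exact mul_mem (inv_mem htS) x.2
    have hnfr : (⟨n, hnS⟩ : ↥(S : Subgroup G)) ∈ frattini ↥(S : Subgroup G) := by
      obtain ⟨y, hy, hyn⟩ := h p pp S ⟨hn, hnS⟩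
      have : (⟨n, hnS⟩ : ↥(S : Subgroup G)) = y := Subtype.ext hyn.symm
      rw [this]; exact hy
    have hxeq : x = (⟨t, htS⟩ : ↥(S : Subgroup G)) * ⟨n, hnS⟩ := Subtype.ext htn.symm
    rw [hxeq]
    exact mul_mem (Subgroup.mem_sup_left (mem_subgroupOf.mpr ht)) (Subgroup.mem_sup_right hnfr)
  have hTtop : T'.subgroupOf S = ⊤ := frattini_nongenerating hA
  have hSM : (S : Subgroup G) ≤ M := (subgroupOf_eq_top.mp hTtop).trans (map_subtype_le _)
  exact S.not_dvd_index (hp.trans (Subgroup.index_dvd_of_le hSM))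

/-- If `N ≤ Φ(G)` and `F'` is a nilpotent normal subgroup of `G/N`, then its preimage
in `G` is nilpotent. -/
lemma nilpotent_comap_of_le_frattini (N : Subgroup G) [N.Normal] (hN : N ≤ frattini G)
    (F' : Subgroup (G ⧸ N)) (hF'normal : F'.Normal) (hF'nil : Group.IsNilpotent F') :
    Group.IsNilpotent ↥(F'.comap (QuotientGroup.mk' N)) := by
  set f := QuotientGroup.mk' N with hf
  have hfsurj : Function.Surjective f := QuotientGroup.mk'_surjective N
  set K := F'.comap f with hKdef
  haveI hKn : K.Normal := Subgroup.Normal.comap hF'normal f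
  have hNK : N ≤ K := by
    intro n hn
    rw [hKdef, Subgroup.mem_comap, hf]
    have : f n = 1 := by
      rw [hf]
      exact (QuotientGroup.eq_one_iff n).mpr hn
    rw [show (QuotientGroup.mk' N) n = f n from rfl, this]
    exact F'.one_mem
  have hmap : map f K = F' := map_comap_eq_self_of_surjective hfsurj F'
  have htfae := (isNilpotent_of_finite_tfae (G := ↥K)).out 0 3
  rw [htfae]
  intro p hp P
  set P' : Subgroup G := map K.subtype P with hP'
  have hP'K : P' ≤ K := map_subtype_le _
  -- the image of `P'` in `G/N` is normal in `G/N`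
  have hesurj : Function.Surjective (f.subgroupMap K) := f.subgroupMap_surjective K
  let Q : Sylow p ↥(map f K) := P.mapSurjective hesurj
  haveI hnilmap : Group.IsNilpotent ↥(map f K) := by rw [hmap]; exact hF'nil
  have htfae2 := (isNilpotent_of_finite_tfae (G := ↥(map f K))).out 0 3
  have hQn : (Q : Subgroup ↥(map f K)).Normal := htfae2.mp hnilmap p hp Q
  haveI : (Q : Subgroup ↥(map f K)).Characteristic := Sylow.characteristic_of_normal Q hQn
  haveI : (map f K).Normal := by rw [hmap]; exact hF'normal
  haveI hQG : ((Q : Subgroup ↥(map f K)).map (map f K).subtype).Normal :=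
    ConjAct.normal_of_characteristic_of_normal
  have hQeq : (Q : Subgroup ↥(map f K)).map (map f K).subtype = map f P' := by
    rw [show (Q : Subgroup ↥(map f K)) = map (f.subgroupMap K) P from rfl,
      Subgroup.map_map, hP', Subgroup.map_map]
    rfl
  have hfP'n : (map f P').Normal := hQeq ▸ hQG
  set H : Subgroup G := P' ⊔ N with hH
  have hHcomap : comap f (map f P') = H := by
    rw [comap_map_eq, hf, QuotientGroup.ker_mk']
  haveI hHn : H.Normal := by
    rw [← hHcomap]; exact Subgroup.Normal.comap hfP'n f
  have hP'H : P' ≤ H := le_sup_left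
  have hHK : H ≤ K := sup_le hP'K hNK
  have hpP' : IsPGroup p P' := P.2.map _
  have hpgrp : IsPGroup p (P'.subgroupOf H) := hpP'.comap_subtype
  have hidx : ¬ p ∣ (P'.subgroupOf H).index := by
    intro hdvd
    have h2 : P'.relIndex H ∣ P'.relIndex K :=
      ⟨H.relIndex K, (relIndex_mul_relIndex _ _ _ hP'H hHK).symm⟩
    have h3 : P'.relIndex K = (P : Subgroup ↥K).index := by
      rw [relIndex, subgroupOf, hP',
        comap_map_eq_self_of_injective (Subgroup.subtype_injective K)]
    exact P.not_dvd_index ((hdvd.trans h2).trans h3.dvd)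
  let PH : Sylow p ↥H := hpgrp.toSylow hidx
  have hfr := Sylow.normalizer_sup_eq_top (N := H) PH
  have hPHcoe : Subgroup.map H.subtype (PH : Subgroup ↥H) = P' := by
    rw [show (PH : Subgroup ↥H) = P'.subgroupOf H from rfl,
      subgroupOf_map_subtype, inf_of_le_left hP'H]
  rw [hPHcoe] at hfr
  have htop : normalizer (P' : Set G) ⊔ frattini G = ⊤ := by
    rw [eq_top_iff, ← hfr]
    apply sup_le le_sup_left
    rw [hH]
    apply sup_le
    · exact le_trans Subgroup.le_normalizer le_sup_left
    · exact le_trans hN le_sup_right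
  have hnorm : normalizer (P' : Set G) = ⊤ := frattini_nongenerating htop
  have hP'n : P'.Normal := Subgroup.normalizer_eq_top_iff.mp hnorm
  exact Subgroup.Normal.of_map_subtype hP'n

end Aux

/-- If `N ⊴ G` satisfies `N ∩ S_p ≤ Φ(S_p)` for every prime `p` and Sylow `p`-subgroup `S_p`,
then the Fitting subgroup of `G/N` equals `F(G)/N` (where the Fitting subgroup is
characterized as the largest nilpotent normal subgroup). -/
theorem fitting_quotient_eq {G : Type*} [Group G] [Finite G]
    (N : Subgroup G) [N.Normal]
    (h : ∀ (p : ℕ), p.Prime → ∀ S : Sylow p G,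
      N ⊓ (S : Subgroup G) ≤ (frattini ↥(S : Subgroup G)).map (S : Subgroup G).subtype)
    (F : Subgroup G) (hFnormal : F.Normal) (hFnil : Group.IsNilpotent F)
    (hFmax : ∀ K : Subgroup G, K.Normal → Group.IsNilpotent K → K ≤ F)
    (F' : Subgroup (G ⧸ N)) (hF'normal : F'.Normal) (hF'nil : Group.IsNilpotent F')
    (hF'max : ∀ K : Subgroup (G ⧸ N), K.Normal → Group.IsNilpotent K → K ≤ F') :
    F' = Subgroup.map (QuotientGroup.mk' N) F := by
  have hN : N ≤ frattini G := le_frattini_of_inf_sylow_le_frattini N h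
  have hsurj : Function.Surjective (QuotientGroup.mk' N) := QuotientGroup.mk'_surjective N
  apply le_antisymm
  · have hKnil := nilpotent_comap_of_le_frattini N hN F' hF'normal hF'nil
    haveI : (F'.comap (QuotientGroup.mk' N)).Normal := Subgroup.Normal.comap hF'normal _
    have hle : F'.comap (QuotientGroup.mk' N) ≤ F := hFmax _ this hKnil
    calc F' = Subgroup.map (QuotientGroup.mk' N) (F'.comap (QuotientGroup.mk' N)) :=
        (Subgroup.map_comap_eq_self_of_surjective hsurj F').symm
    _ ≤ Subgroup.map (QuotientGroup.mk' N) F := Subgroup.map_mono hle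
  · apply hF'max
    · exact Subgroup.Normal.map hFnormal _ hsurj
    · haveI := hFnil
      exact nilpotent_of_surjective _ ((QuotientGroup.mk' N).subgroupMap_surjective F)
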